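/- Let r ≥ 0 be an integer and x a real number. For every integer n with n ≥ r, H_{n,λ}^{(r)}(x) = Σ_{k=r}^{n} (−1)^{n−k}·((x)_{n−k}/(n−k)!)·Σ_{l=r+1}^{k+1} Σ_{l_1+···+l_{r+1}=l, each l_i ≥ 1} ((−λ)^{l−r−1}/(l_1!···l_{r+1}!))·(1)_{l_1,1/λ}···(1)_{l_{r+1},1/λ}, and for every integer n with 0 ≤ n < r, H_{n,λ}^{(r)}(x) = 0. -/

import Mathlib

open Finset PowerSeries

/-- degenerate falling factorial `(x)_{n,λ}`; `dff 1 x n` is the ordinary falling factorial. -/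
noncomputable def dff (lam x : ℝ) (n : ℕ) : ℝ := ∏ i ∈ Finset.range n, (x - (i : ℝ) * lam)

/-- `(1)_{n,1/λ} = ∏_{i<n} (1 - i/λ)`. -/
noncomputable def oneFall (lam : ℝ) (n : ℕ) : ℝ := ∏ i ∈ Finset.range n, (1 - (i : ℝ) / lam)

/-- degenerate exponential `e_λ^x(t)` as a formal power series. -/
noncomputable def degExp (lam x : ℝ) : PowerSeries ℝ :=
  PowerSeries.mk fun n => dff lam x n / n.factorial

/-- `(1+t)^y = Σ_{n≥0} (y)_n t^n/n!`. -/
noncomputable def onePlus (y : ℝ) : PowerSeries ℝ :=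
  PowerSeries.mk fun n => dff 1 y n / n.factorial

/-- `(1-t)^y = Σ_{n≥0} (y)_n (-1)^n t^n/n!`. -/
noncomputable def oneMinus (y : ℝ) : PowerSeries ℝ :=
  PowerSeries.mk fun n => dff 1 y n * (-1) ^ n / n.factorial

/-- `log_λ(1+t) = Σ_{n≥1} λ^{n-1} (1)_{n,1/λ} t^n/n!`. -/
noncomputable def degLog (lam : ℝ) : PowerSeries ℝ :=
  PowerSeries.mk fun n => if n = 0 then 0 else lam ^ (n - 1) * oneFall lam n / n.factorial

/-- `log_λ(1-t) = Σ_{n≥1} λ^{n-1} (1)_{n,1/λ} (-1)^n t^n/n!`. -/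
noncomputable def degLogNeg (lam : ℝ) : PowerSeries ℝ :=
  PowerSeries.mk fun n =>
    if n = 0 then 0 else lam ^ (n - 1) * oneFall lam n * (-1) ^ n / n.factorial

/-- composition `f(g(t))` of formal power series (the usual composition when the
constant term of `g` is zero). -/
noncomputable def pcomp (f g : PowerSeries ℝ) : PowerSeries ℝ :=
  PowerSeries.mk fun n =>
    ∑ k ∈ Finset.range (n + 1), (PowerSeries.coeff k f) * (PowerSeries.coeff n (g ^ k))

/-- Explicit expression for the degenerate harmonic polynomials of order `r`:
`H_{n,λ}^{(r)}(x) = Σ_{k=r}^{n} (-1)^{n-k} ((x)_{n-k}/(n-k)!) Σ_{l=r+1}^{k+1}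
  Σ_{l₁+⋯+l_{r+1}=l, lᵢ≥1} ((-λ)^{l-r-1}/(l₁!⋯l_{r+1}!)) (1)_{l₁,1/λ} ⋯ (1)_{l_{r+1},1/λ}`
for `n ≥ r`, and `H_{n,λ}^{(r)}(x) = 0` for `n < r`. -/

lemma coeff_pow_tuple (φ : PowerSeries ℝ) (k n : ℕ) :
    PowerSeries.coeff n (φ ^ k) =
      ∑ f ∈ Finset.Nat.antidiagonalTuple k n, ∏ i, PowerSeries.coeff (f i) φ := by
  rw [PowerSeries.coeff_pow]
  refine Finset.sum_nbij' (fun l => fun i : Fin k => l i)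
    (fun f => Finsupp.onFinset (Finset.range k)
      (fun j => if h : j < k then f ⟨j, h⟩ else 0)
      (fun a ha => by
        rw [Finset.mem_range]; by_contra hc; exact ha (dif_neg hc)))
    ?_ ?_ ?_ ?_ ?_
  · intro l hl
    simp only [Finset.mem_finsuppAntidiag] at hl
    rw [Finset.Nat.mem_antidiagonalTuple, Fin.sum_univ_eq_sum_range]
    exact hl.1
  · intro f hf
    rw [Finset.Nat.mem_antidiagonalTuple] at hf
    simp only [Finset.mem_finsuppAntidiag]
    constructor
    · rw [Finset.sum_congr rfl (g := fun j => if h : j < k then f ⟨j, h⟩ else 0) fun j hj => by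
        simp [Finsupp.onFinset]]
      rw [← hf, ← Fin.sum_univ_eq_sum_range (fun j => if h : j < k then f ⟨j, h⟩ else 0) k]
      exact Finset.sum_congr rfl fun i _ => by simp [i.isLt]
    · exact Finsupp.support_onFinset_subset
  · intro l hl
    simp only [Finset.mem_finsuppAntidiag] at hl
    ext j
    simp only [Finsupp.onFinset_apply]
    split_ifs with h
    · rfl
    · symm
      by_contra hc
      have := hl.2 (Finsupp.mem_support_iff.mpr hc)
      simp [Finset.mem_range] at this
      omega
  · intro f hf
    funext i
    simp [i.isLt]
  · intro l hl
    exact (Fin.prod_univ_eq_prod_range (fun i => PowerSeries.coeff (l i) φ) k).symm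



lemma coeff_neg_degLogNeg (lam : ℝ) (m : ℕ) (hm : 1 ≤ m) :
    PowerSeries.coeff m (-degLogNeg lam) = (-lam) ^ (m - 1) * (oneFall lam m / m.factorial) := by
  obtain ⟨p, rfl⟩ := Nat.exists_eq_add_of_le hm
  simp only [degLogNeg, map_neg, PowerSeries.coeff_mk]
  rw [if_neg (by omega)]
  have : 1 + p - 1 = p := by omega
  rw [this, pow_add, neg_pow, neg_pow]
  ring

lemma coeff_pow_g (lam : ℝ) (r l : ℕ) :
    PowerSeries.coeff l ((-degLogNeg lam) ^ (r + 1)) =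
      ∑ f ∈ (Finset.Nat.antidiagonalTuple (r + 1) l).filter (fun f => ∀ i, 1 ≤ f i),
        (-lam) ^ (l - (r + 1)) / (∏ i, ((f i).factorial : ℝ)) * ∏ i, oneFall lam (f i) := by
  rw [coeff_pow_tuple,
    ← Finset.sum_filter_add_sum_filter_not _ (fun f => ∀ i, 1 ≤ f i)]
  have h2 : ∑ f ∈ (Finset.Nat.antidiagonalTuple (r + 1) l).filter
      (fun f => ¬ ∀ i, 1 ≤ f i), ∏ i, PowerSeries.coeff (f i) (-degLogNeg lam) = 0 := by
    refine Finset.sum_eq_zero fun f hf => ?_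
    simp only [Finset.mem_filter] at hf
    push_neg at hf
    obtain ⟨i, hi⟩ := hf.2
    refine Finset.prod_eq_zero (Finset.mem_univ i) ?_
    have : f i = 0 := by omega
    simp [this, degLogNeg]
  rw [h2, add_zero]
  refine Finset.sum_congr rfl fun f hf => ?_
  simp only [Finset.mem_filter, Finset.Nat.mem_antidiagonalTuple] at hf
  obtain ⟨hsum, hpos⟩ := hf
  have hrw : ∀ i : Fin (r + 1), PowerSeries.coeff (f i) (-degLogNeg lam) =
      (-lam) ^ (f i - 1) * (oneFall lam (f i) / (f i).factorial) :=
    fun i => coeff_neg_degLogNeg lam (f i) (hpos i)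
  rw [Finset.prod_congr rfl fun i _ => hrw i, Finset.prod_mul_distrib,
    Finset.prod_pow_eq_pow_sum]
  have hidx : ∑ i : Fin (r + 1), (f i - 1) = l - (r + 1) := by
    have h1 : ∑ i : Fin (r + 1), (f i - 1) + ∑ _i : Fin (r + 1), 1 = ∑ i : Fin (r + 1), f i := by
      rw [← Finset.sum_add_distrib]
      exact Finset.sum_congr rfl fun i _ => by have := hpos i; omega
    simp only [Finset.sum_const, Finset.card_univ, Fintype.card_fin, smul_eq_mul, mul_one] at h1
    omega
  rw [hidx, Finset.prod_div_distrib]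
  ring

lemma coeff_pow_g_zero (lam : ℝ) (r l : ℕ) (hl : l ≤ r) :
    PowerSeries.coeff l ((-degLogNeg lam) ^ (r + 1)) = 0 := by
  rw [coeff_pow_g]
  refine Finset.sum_eq_zero fun f hf => ?_
  simp only [Finset.mem_filter, Finset.Nat.mem_antidiagonalTuple] at hf
  obtain ⟨hsum, hpos⟩ := hf
  have := Finset.card_nsmul_le_sum Finset.univ f 1 (fun i _ => hpos i)
  simp only [Finset.card_univ, Fintype.card_fin, smul_eq_mul, mul_one, hsum] at this
  omega



lemma binom_alt (x : ℝ) (M : ℕ) :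
    ∑ m ∈ Finset.range (M + 1), (-1 : ℝ) ^ m * (dff 1 x m / m.factorial) =
      (-1) ^ M * (dff 1 (x - 1) M / M.factorial) := by
  induction M with
  | zero => simp [dff]
  | succ M ih =>
    rw [Finset.sum_range_succ, ih]
    have h1 : dff 1 x (M + 1) = x * dff 1 (x - 1) M := by
      rw [dff, Finset.prod_range_succ']
      simp only [Nat.cast_zero, zero_mul, sub_zero, dff]
      rw [mul_comm]
      congr 1
      exact Finset.prod_congr rfl fun i _ => by push_cast; ring
    have h2 : dff 1 (x - 1) (M + 1) = dff 1 (x - 1) M * (x - 1 - M) := by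
      rw [dff, Finset.prod_range_succ]
      simp [dff]
    have hf : ((M + 1).factorial : ℝ) = (M + 1) * M.factorial := by
      rw [Nat.factorial_succ]; push_cast; ring
    have hM : (M.factorial : ℝ) ≠ 0 := Nat.cast_ne_zero.mpr M.factorial_ne_zero
    have hM1 : (M : ℝ) + 1 ≠ 0 := by positivity
    rw [h1, h2, hf, pow_succ]
    field_simp
    ring

theorem stmt_17 (lam : ℝ) (hlam : lam ≠ 0)
    (Hp : ℕ → ℝ → ℕ → ℝ)
    (hHp : ∀ (r : ℕ) (x : ℝ), PowerSeries.X * PowerSeries.mk (fun n => Hp r x n) =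
      (- degLogNeg lam) ^ (r + 1) * oneMinus (x - 1))
    (r : ℕ) (x : ℝ) :
    (∀ n : ℕ, r ≤ n → Hp r x n =
      ∑ k ∈ Finset.Icc r n, (-1 : ℝ) ^ (n - k) * (dff 1 x (n - k) / (n - k).factorial) *
        ∑ l ∈ Finset.Icc (r + 1) (k + 1),
          ∑ f ∈ (Finset.Nat.antidiagonalTuple (r + 1) l).filter (fun f => ∀ i, 1 ≤ f i),
            (-lam) ^ (l - (r + 1)) / (∏ i, ((f i).factorial : ℝ)) *
              ∏ i, oneFall lam (f i)) ∧
    (∀ n : ℕ, n < r → Hp r x n = 0) := by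
  have key : ∀ n : ℕ, Hp r x n =
      PowerSeries.coeff (n + 1) ((-degLogNeg lam) ^ (r + 1) * oneMinus (x - 1)) := by
    intro n
    have h := congrArg (PowerSeries.coeff (n + 1)) (hHp r x)
    rwa [PowerSeries.coeff_succ_X_mul, PowerSeries.coeff_mk] at h
  set A : ℕ → ℝ := fun l =>
      ∑ f ∈ (Finset.Nat.antidiagonalTuple (r + 1) l).filter (fun f => ∀ i, 1 ≤ f i),
        (-lam) ^ (l - (r + 1)) / (∏ i, ((f i).factorial : ℝ)) * ∏ i, oneFall lam (f i)
    with hA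
  constructor
  · intro n hn
    rw [key n, PowerSeries.coeff_mul, Finset.Nat.sum_antidiagonal_eq_sum_range_succ_mk]
    -- restrict coefficient sum to Icc (r+1) (n+1)
    have hrestrict : ∑ l ∈ Finset.range (n + 1 + 1),
        PowerSeries.coeff l ((-degLogNeg lam) ^ (r + 1)) *
          PowerSeries.coeff (n + 1 - l) (oneMinus (x - 1)) =
        ∑ l ∈ Finset.Icc (r + 1) (n + 1),
        PowerSeries.coeff l ((-degLogNeg lam) ^ (r + 1)) *
          PowerSeries.coeff (n + 1 - l) (oneMinus (x - 1)) := by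
      symm
      refine Finset.sum_subset (fun l hl => ?_) (fun l hl hnot => ?_)
      · simp only [Finset.mem_Icc] at hl; simp only [Finset.mem_range]; omega
      · simp only [Finset.mem_range] at hl
        simp only [Finset.mem_Icc, not_and, not_le] at hnot
        have : l ≤ r := by omega
        rw [coeff_pow_g_zero lam r l this, zero_mul]
    rw [hrestrict]
    -- now transform the RHS
    have hstep1 : ∀ k ∈ Finset.Icc r n,
        (∑ l ∈ Finset.Icc (r + 1) (k + 1),
          ∑ f ∈ (Finset.Nat.antidiagonalTuple (r + 1) l).filter (fun f => ∀ i, 1 ≤ f i),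
            (-lam) ^ (l - (r + 1)) / (∏ i, ((f i).factorial : ℝ)) *
              ∏ i, oneFall lam (f i)) =
        ∑ l ∈ Finset.Icc (r + 1) (n + 1), if l ≤ k + 1 then A l else 0 := by
      intro k hk
      simp only [Finset.mem_Icc] at hk
      rw [← Finset.sum_filter]
      refine Finset.sum_congr ?_ fun l _ => rfl
      ext a
      simp only [Finset.mem_Icc, Finset.mem_filter]
      omega
    calc
      ∑ l ∈ Finset.Icc (r + 1) (n + 1),
          PowerSeries.coeff l ((-degLogNeg lam) ^ (r + 1)) *
            PowerSeries.coeff (n + 1 - l) (oneMinus (x - 1))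
        = ∑ l ∈ Finset.Icc (r + 1) (n + 1),
            ((-1 : ℝ) ^ (n + 1 - l) * (dff 1 (x - 1) (n + 1 - l) / (n + 1 - l).factorial)) *
              A l := by
          refine Finset.sum_congr rfl fun l _ => ?_
          rw [coeff_pow_g]
          simp only [hA, oneMinus, PowerSeries.coeff_mk]
          ring
      _ = ∑ l ∈ Finset.Icc (r + 1) (n + 1),
            (∑ k ∈ Finset.Icc r n, if l ≤ k + 1 then
              (-1 : ℝ) ^ (n - k) * (dff 1 x (n - k) / (n - k).factorial) * A l else 0) := by
          refine Finset.sum_congr rfl fun l hl => ?_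
          simp only [Finset.mem_Icc] at hl
          rw [← Finset.sum_filter]
          have hfe : (Finset.Icc r n).filter (fun k => l ≤ k + 1) = Finset.Icc (l - 1) n := by
            ext a
            simp only [Finset.mem_Icc, Finset.mem_filter]
            omega
          rw [hfe, ← Finset.sum_mul]
          congr 1
          have hre : ∑ k ∈ Finset.Icc (l - 1) n,
              (-1 : ℝ) ^ (n - k) * (dff 1 x (n - k) / (n - k).factorial) =
              ∑ m ∈ Finset.range (n + 1 - l + 1),
                (-1 : ℝ) ^ m * (dff 1 x m / m.factorial) := by
            refine Finset.sum_nbij' (fun k => n - k) (fun m => n - m)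
              (fun a ha => ?_) (fun a ha => ?_) (fun a ha => ?_) (fun a ha => ?_)
              (fun a ha => ?_)
            · simp only [Finset.mem_Icc] at ha; simp only [Finset.mem_range]; omega
            · simp only [Finset.mem_range] at ha; simp only [Finset.mem_Icc]; omega
            · simp only [Finset.mem_Icc] at ha; show n - (n - a) = a; omega
            · simp only [Finset.mem_range] at ha; show n - (n - a) = a; omega
            · rfl
          rw [hre, binom_alt]
      _ = ∑ k ∈ Finset.Icc r n,
            (∑ l ∈ Finset.Icc (r + 1) (n + 1), if l ≤ k + 1 then
              (-1 : ℝ) ^ (n - k) * (dff 1 x (n - k) / (n - k).factorial) * A l else 0) :=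
          Finset.sum_comm
      _ = ∑ k ∈ Finset.Icc r n,
            (-1 : ℝ) ^ (n - k) * (dff 1 x (n - k) / (n - k).factorial) *
              ∑ l ∈ Finset.Icc (r + 1) (k + 1),
                ∑ f ∈ (Finset.Nat.antidiagonalTuple (r + 1) l).filter (fun f => ∀ i, 1 ≤ f i),
                  (-lam) ^ (l - (r + 1)) / (∏ i, ((f i).factorial : ℝ)) *
                    ∏ i, oneFall lam (f i) := by
          refine Finset.sum_congr rfl fun k hk => ?_
          rw [hstep1 k hk, Finset.mul_sum]
          refine Finset.sum_congr rfl fun l _ => ?_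
          split_ifs <;> simp
  · intro n hn
    rw [key n, PowerSeries.coeff_mul]
    refine Finset.sum_eq_zero fun ij hij => ?_
    simp only [Finset.HasAntidiagonal.mem_antidiagonal] at hij
    have : ij.1 ≤ r := by omega
    rw [coeff_pow_g_zero lam r ij.1 this, zero_mul]
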